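/- arXiv:2305.11011 — 4 statements merged into one kernel-verified Lean document; each statement's English description precedes it below -/
import Mathlib

section
/- Define h : {(x,y) ∈ ℝ² : 0 ≤ x ≤ y ≤ 1} → ℝ by h(x,y) = (2/3)·max(x+y-1, 0) + (1/6)·max(5x+3y-2, 0) + 2/3. Then for all θ₁, θ₂, θ₃ with 0 ≤ θ₁ ≤ θ₂ ≤ θ₃ ≤ 1, writing s = max(θ₁+θ₂+θ₃, 1), we have 2·s ≤ h(θ₁,θ₂) + h(θ₁,θ₃) + h(θ₂,θ₃) (the non-deficit constraint for 3 agents). -/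
noncomputable def h1 (x y : ℝ) : ℝ :=
  2 / 3 * max (x + y - 1) 0 + 1 / 6 * max (5 * x + 3 * y - 2) 0 + 2 / 3

set_option maxHeartbeats 2000000 in
lemma aux_1 (a b c : ℝ) (ha : 0 ≤ a) (hab : a ≤ b) (hbc : b ≤ c) (hc : c ≤ 1) :
    2 * max (a + b + c) 1 ≤ h1 a b + h1 a c + h1 b c := by
  simp only [h1, max_def]
  split_ifs <;> linarith

theorem stmt_1 : ∀ θ₁ θ₂ θ₃ : ℝ, 0 ≤ θ₁ → θ₁ ≤ θ₂ → θ₂ ≤ θ₃ → θ₃ ≤ 1 →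
    2 * max (θ₁ + θ₂ + θ₃) 1 ≤ h1 θ₁ θ₂ + h1 θ₁ θ₃ + h1 θ₂ θ₃ :=
  fun _ _ _ => aux_1 _ _ _
end

section
/- Define h : {(x,y) ∈ ℝ² : 0 ≤ x ≤ y ≤ 1} → ℝ by h(x,y) = (2/3)·max(x+y-1, 0) + (1/6)·max(5x+3y-2, 0) + 2/3. Then for all θ₁, θ₂, θ₃ with 0 ≤ θ₁ ≤ θ₂ ≤ θ₃ ≤ 1, writing s = max(θ₁+θ₂+θ₃, 1), we have h(θ₁,θ₂) + h(θ₁,θ₃) + h(θ₂,θ₃) ≤ (7/3)·s. Consequently, this mechanism achieves worst-case allocative efficiency ratio α = 2/3, since 3 - α = 7/3. -/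
set_option maxHeartbeats 2000000 in
theorem stmt_2 : ∀ θ₁ θ₂ θ₃ : ℝ, 0 ≤ θ₁ → θ₁ ≤ θ₂ → θ₂ ≤ θ₃ → θ₃ ≤ 1 →
    h1 θ₁ θ₂ + h1 θ₁ θ₃ + h1 θ₂ θ₃ ≤ 7 / 3 * max (θ₁ + θ₂ + θ₃) 1 := by
  intro a b c ha hab hbc hc1
  unfold h1
  rcases max_cases (a + b - 1) 0 with ⟨e1, _⟩ | ⟨e1, _⟩ <;>
  rcases max_cases (5 * a + 3 * b - 2) 0 with ⟨e2, _⟩ | ⟨e2, _⟩ <;>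
  rcases max_cases (a + c - 1) 0 with ⟨e3, _⟩ | ⟨e3, _⟩ <;>
  rcases max_cases (5 * a + 3 * c - 2) 0 with ⟨e4, _⟩ | ⟨e4, _⟩ <;>
  rcases max_cases (b + c - 1) 0 with ⟨e5, _⟩ | ⟨e5, _⟩ <;>
  rcases max_cases (5 * b + 3 * c - 2) 0 with ⟨e6, _⟩ | ⟨e6, _⟩ <;>
  rcases max_cases (a + b + c) 1 with ⟨e7, _⟩ | ⟨e7, _⟩ <;>
  rw [e1, e2, e3, e4, e5, e6, e7] <;> linarith
end

section
/- Let h : {(x,y) : 0 ≤ x ≤ y ≤ 1} → ℝ be any function and α ∈ ℝ. Suppose for all 0 ≤ θ₁ ≤ θ₂ ≤ θ₃ ≤ 1, writing s = max(θ₁+θ₂+θ₃, 1), we have 2s ≤ h(θ₁,θ₂) + h(θ₁,θ₃) + h(θ₂,θ₃) ≤ (3-α)·s. Then α ≤ 2/3. (In particular, 2/3 is an upper bound on the worst-case allocative efficiency ratio of any VCG redistribution mechanism for 3 agents.) -/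
theorem stmt_3 (h : ℝ → ℝ → ℝ) (α : ℝ)
    (H : ∀ θ₁ θ₂ θ₃ : ℝ, 0 ≤ θ₁ → θ₁ ≤ θ₂ → θ₂ ≤ θ₃ → θ₃ ≤ 1 →
      2 * max (θ₁ + θ₂ + θ₃) 1 ≤ h θ₁ θ₂ + h θ₁ θ₃ + h θ₂ θ₃ ∧
      h θ₁ θ₂ + h θ₁ θ₃ + h θ₂ θ₃ ≤ (3 - α) * max (θ₁ + θ₂ + θ₃) 1) :
    α ≤ 2 / 3 := by
  have h1 := H 0 0 0 (by norm_num) (by norm_num) (by norm_num) (by norm_num)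
  have h2 := H 0 0 1 (by norm_num) (by norm_num) (by norm_num) (by norm_num)
  have h3 := H 0 1 1 (by norm_num) (by norm_num) (by norm_num) (by norm_num)
  have h4 := H 1 1 1 (by norm_num) (by norm_num) (by norm_num) (by norm_num)
  norm_num [max_eq_left, max_eq_right] at h1 h2 h3 h4
  linarith [h1.1, h1.2, h2.1, h2.2, h3.1, h3.2, h4.1, h4.2]
end

section
/- Let h : {(x,y) : 0 ≤ x ≤ y ≤ 1} → ℝ be defined by h(x,y) = (2/3)·max(x+y−1, 0) + (1/6)·max(5x+3y−2, 0) + 2/3. Then the mechanism constraints are tight at the extreme profiles: at θ = (0,0,0) we have h(0,0)·3 = 2 = 2·s(θ) (non-deficit binds), and at θ = (1,1,1) we have 3·h(1,1) = 7 = (3 − 2/3)·s(θ) (the efficiency-ratio constraint with α = 2/3 binds). Hence the worst-case allocative efficiency ratio of this mechanism is exactly 2/3 and cannot be improved. -/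
theorem stmt_15 :
    3 * h1 0 0 = 2 * max ((0 : ℝ) + 0 + 0) 1 ∧
    3 * h1 1 1 = (3 - 2 / 3) * max ((1 : ℝ) + 1 + 1) 1 ∧
    (∀ α : ℝ, (∀ θ₁ θ₂ θ₃ : ℝ, 0 ≤ θ₁ → θ₁ ≤ θ₂ → θ₂ ≤ θ₃ → θ₃ ≤ 1 →
        h1 θ₁ θ₂ + h1 θ₁ θ₃ + h1 θ₂ θ₃ ≤ (3 - α) * max (θ₁ + θ₂ + θ₃) 1) →
      α ≤ 2 / 3) := by
  refine ⟨by norm_num [h1], by norm_num [h1], fun α hα => ?_⟩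
  have := hα 1 1 1 (by norm_num) le_rfl le_rfl le_rfl
  simp only [h1] at this
  norm_num at this
  linarith
end
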